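/- A direct sum ⊕_{i∈I} M is a pure submodule of the direct product ∏_{i∈I} M. -/

import Mathlib

universe u v

open scoped TensorProduct

/-- The direct sum `⊕_{i ∈ ι} M` is a pure submodule of the direct product `∏_{i ∈ ι} M`:
tensoring the canonical inclusion with any module `N` yields an injective map. -/
theorem directSum_pure_in_pi {A : Type u} [CommRing A] (ι : Type v) (M : Type v)
    [AddCommGroup M] [Module A M] :
    ∀ (N : Type v) [AddCommGroup N] [Module A N],
      Function.Injective
        (LinearMap.lTensor N (Finsupp.lcoeFun : (ι →₀ M) →ₗ[A] (ι → M))) := by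
  intro N _ _
  classical
  set e := TensorProduct.finsuppRight A A N M ι with he
  set ψ : N ⊗[A] (ι → M) →ₗ[A] (ι → N ⊗[A] M) :=
    LinearMap.pi (fun i => LinearMap.lTensor N (LinearMap.proj i)) with hψ
  have hcomm : ∀ x : N ⊗[A] (ι →₀ M),
      ψ (LinearMap.lTensor N (Finsupp.lcoeFun : (ι →₀ M) →ₗ[A] (ι → M)) x)
        = (e x : ι → N ⊗[A] M) := by
    intro x
    induction x using TensorProduct.induction_on with
    | zero => simp
    | tmul n f =>
        funext i
        simp [hψ, he, TensorProduct.finsuppRight_apply_tmul_apply, Finsupp.lcoeFun]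
    | add x y hx hy => simp [map_add, hx, hy, Finsupp.coe_add]
  intro x y h
  have h2 : (e x : ι → N ⊗[A] M) = (e y : ι → N ⊗[A] M) := by
    rw [← hcomm, ← hcomm, h]
  have h3 : e x = e y := DFunLike.coe_injective h2
  exact e.injective h3
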